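/- (ETF sparsity bound) If v_1, ..., v_N ∈ C^r form an ETF with synthesis matrix V, then every nonzero vector x in the row space of V satisfies ‖x‖_0 ≥ N·(1 + (r-1)²/(N-1))^{-1}. -/

import Mathlib

open Matrix BigOperators

lemma norm_sq_re_im (z : ℂ) : ‖z‖^2 = z.re^2 + z.im^2 := by
  rw [Complex.sq_norm, Complex.normSq_apply]; ring

lemma cs_complex {ι : Type*} [Fintype ι] (a b : ι → ℂ) :
    (∑ i, ((starRingEnd ℂ) (a i) * b i)).re ^ 2 ≤ (∑ i, ‖a i‖^2) * (∑ i, ‖b i‖^2) := by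
  classical
  have h := Finset.sum_mul_sq_le_sq_mul_sq (Finset.univ : Finset (ι × Bool))
    (fun p => if p.2 then (a p.1).re else (a p.1).im)
    (fun p => if p.2 then (b p.1).re else (b p.1).im)
  simp only [Fintype.sum_prod_type, Fintype.sum_bool, if_true, if_false] at h
  calc (∑ i, ((starRingEnd ℂ) (a i) * b i)).re ^ 2
      = (∑ i, ((a i).re * (b i).re + (a i).im * (b i).im)) ^ 2 := by
        rw [Complex.re_sum]
        congr 1
        refine Finset.sum_congr rfl fun i _ => ?_
        simp [Complex.mul_re, Complex.conj_re, Complex.conj_im]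
    _ ≤ (∑ i, ((a i).re^2 + (a i).im^2)) * (∑ i, ((b i).re^2 + (b i).im^2)) := by
        simpa [Finset.sum_add_distrib] using h
    _ = (∑ i, ‖a i‖^2) * (∑ i, ‖b i‖^2) := by
        simp only [norm_sq_re_im]

lemma conj_mul_self (z : ℂ) : (starRingEnd ℂ) z * z = ((‖z‖^2 : ℝ) : ℂ) := by
  rw [← Complex.normSq_eq_conj_mul_self, Complex.normSq_eq_norm_sq]

lemma mul_conj_self (z : ℂ) : z * (starRingEnd ℂ) z = ((‖z‖^2 : ℝ) : ℂ) := by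
  rw [mul_comm]; exact conj_mul_self z

lemma pair_inner {n : ℕ} (a b c d : Fin n → ℂ) (s u : ℂ) :
    ∑ k, ∑ l, ((a k * b l - if k = l then s else 0) * (c k * d l - if k = l then u else 0))
    = (∑ k, a k * c k) * (∑ l, b l * d l) - s * (∑ k, c k * d k)
      - u * (∑ k, a k * b k) + s * u * n := by
  have expand : ∀ k l : Fin n,
      (a k * b l - if k = l then s else 0) * (c k * d l - if k = l then u else 0)
      = (a k * c k) * (b l * d l)
        - (if k = l then s * (c k * d l) else 0)
        - (if k = l then u * (a k * b l) else 0)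
        + (if k = l then s * u else 0) := by
    intro k l
    by_cases h : k = l <;> simp [h] <;> ring
  simp_rw [expand, Finset.sum_add_distrib, Finset.sum_sub_distrib, Finset.sum_ite_eq,
    Finset.mem_univ, if_true]
  have h1 : (∑ k, a k * c k) * (∑ l, b l * d l) = ∑ k, ∑ l, (a k * c k) * (b l * d l) := by
    rw [Finset.sum_mul]
    exact Finset.sum_congr rfl fun k _ => Finset.mul_sum _ _ _
  rw [← h1]
  simp only [Finset.sum_const, Finset.card_univ, Fintype.card_fin, nsmul_eq_mul]
  rw [← Finset.mul_sum, ← Finset.mul_sum]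
  ring

lemma swap_sum3 {m : ℕ} {ι : Type*} [Fintype ι] (F : Fin m → Fin m → ι → ℂ) :
    ∑ k, ∑ l, ∑ i, F k l i = ∑ i, ∑ k, ∑ l, F k l i :=
  calc ∑ k, ∑ l, ∑ i, F k l i
      = ∑ k, ∑ i, ∑ l, F k l i :=
        Finset.sum_congr rfl fun k _ =>
          Finset.sum_comm (f := fun l i => F k l i)
    _ = ∑ i, ∑ k, ∑ l, F k l i :=
        Finset.sum_comm (f := fun k i => ∑ l, F k l i)

set_option maxHeartbeats 1000000 in
theorem stmt_13 (N r : ℕ) (hr : 2 ≤ r) (hNr : r < N)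
    (v : Fin N → Fin r → ℂ)
    (hunit : ∀ i, ∑ k, ‖v i k‖ ^ 2 = 1)
    (htight : (∑ i, Matrix.vecMulVec (v i) (fun l => (starRingEnd ℂ) (v i l)))
      = ((N : ℂ) / (r : ℂ)) • (1 : Matrix (Fin r) (Fin r) ℂ))
    (α : ℝ)
    (heq : ∀ i j : Fin N, i ≠ j → ‖∑ k, (starRingEnd ℂ) (v i k) * v j k‖ = α)
    (y : Fin r → ℂ) (x : Fin N → ℂ)
    (hx : x = fun i => ∑ k, (starRingEnd ℂ) (v i k) * y k)
    (hx0 : x ≠ 0) :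
    (N : ℝ) * (1 + ((r : ℝ) - 1) ^ 2 / ((N : ℝ) - 1))⁻¹
      ≤ ((Finset.univ.filter fun i => x i ≠ 0).card : ℝ) := by
  classical
  have hxi : ∀ i, x i = ∑ k, (starRingEnd ℂ) (v i k) * y k := fun i => by rw [hx]
  have hr0 : (0:ℝ) < r := by
    have : (0:ℕ) < r := by omega
    exact_mod_cast this
  have hN0 : (0:ℝ) < N := by
    have : (0:ℕ) < N := by omega
    exact_mod_cast this
  have hN1 : (1:ℝ) < N := by
    have : (1:ℕ) < N := by omega
    exact_mod_cast this
  have hrR : (1:ℝ) < r := by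
    have : (1:ℕ) < r := by omega
    exact_mod_cast this
  have hrC : (r:ℂ) ≠ 0 := Nat.cast_ne_zero.mpr (by omega)
  have hrne : (r:ℝ) ≠ 0 := ne_of_gt hr0
  have hN1ne : (N:ℝ) - 1 ≠ 0 := by linarith
  set t : ℝ := ∑ k, ‖y k‖ ^ 2 with htdef
  have hunitC : ∀ i, ∑ k, (starRingEnd ℂ) (v i k) * v i k = 1 := by
    intro i
    simp_rw [conj_mul_self]
    rw [← Complex.ofReal_sum, hunit i, Complex.ofReal_one]
  have hunitC' : ∀ i, ∑ k, v i k * (starRingEnd ℂ) (v i k) = 1 := by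
    intro i
    simp_rw [mul_conj_self]
    rw [← Complex.ofReal_sum, hunit i, Complex.ofReal_one]
  have htC : ∑ k, (starRingEnd ℂ) (y k) * y k = ((t:ℝ):ℂ) := by
    simp_rw [conj_mul_self]
    rw [← Complex.ofReal_sum, htdef]
  have htC' : ∑ k, y k * (starRingEnd ℂ) (y k) = ((t:ℝ):ℂ) := by
    simp_rw [mul_conj_self]
    rw [← Complex.ofReal_sum, htdef]
  clear_value t
  have htight' : ∀ k l, (∑ i, v i k * (starRingEnd ℂ) (v i l))
      = ((N:ℂ)/r) * (if k = l then 1 else 0) := by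
    intro k l
    have h := congrFun (congrFun htight k) l
    simp only [Matrix.sum_apply, Matrix.vecMulVec_apply, Matrix.smul_apply, Matrix.one_apply,
      smul_eq_mul] at h
    exact h
  have hg' : ∀ k l, (∑ i, (starRingEnd ℂ) (v i k) * v i l)
      = ((N:ℂ)/r) * (if k = l then 1 else 0) := by
    intro k l
    have e : ∑ i, (starRingEnd ℂ) (v i k) * v i l
        = (starRingEnd ℂ) (∑ i, v i k * (starRingEnd ℂ) (v i l)) := by
      rw [map_sum]
      refine Finset.sum_congr rfl fun i _ => ?_
      rw [_root_.map_mul, Complex.conj_conj]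
    rw [e, htight' k l, _root_.map_mul, map_div₀, map_natCast, map_natCast]
    congr 1
    split <;> simp
  set g : Fin N → Fin N → ℂ := fun i j => ∑ k, (starRingEnd ℂ) (v i k) * v j k with hgdef
  have hgapp : ∀ i j, g i j = ∑ k, (starRingEnd ℂ) (v i k) * v j k := fun i j => rfl
  clear_value g
  have hgii : ∀ i, g i i = 1 := fun i => by rw [hgapp]; exact hunitC i
  have hgα : ∀ i j, i ≠ j → ‖g i j‖^2 = α^2 := by
    intro i j h
    rw [hgapp, heq i j h]
  have collapse : ∀ (w : Fin N → Fin r → Fin r → ℂ) (f : Fin r → Fin r → ℂ),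
      (∀ k l, (∑ i, w i k l) = ((N:ℂ)/r) * (if k = l then 1 else 0)) →
      (∑ i, ∑ k, ∑ l, f k l * w i k l) = ((N:ℂ)/r) * ∑ k, f k k := by
    intro w f hw
    have step : ∑ i, ∑ k, ∑ l, f k l * w i k l = ∑ k, ∑ l, f k l * ∑ i, w i k l := by
      rw [Finset.sum_comm]
      refine Finset.sum_congr rfl fun k _ => ?_
      rw [Finset.sum_comm]
      exact Finset.sum_congr rfl fun l _ => (Finset.mul_sum _ _ _).symm
    rw [step]
    simp_rw [hw]
    rw [Finset.mul_sum]
    refine Finset.sum_congr rfl fun k _ => ?_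
    simp [mul_ite, mul_one, mul_zero, Finset.sum_ite_eq, mul_comm]
  -- (I1) : sum of |x i|^2
  have hxexp : ∀ i, (starRingEnd ℂ) (x i) * x i
      = ∑ k, ∑ l, ((starRingEnd ℂ) (y k) * y l) * (v i k * (starRingEnd ℂ) (v i l)) := by
    intro i
    rw [hxi i, map_sum, Finset.sum_mul_sum]
    refine Finset.sum_congr rfl fun k _ => Finset.sum_congr rfl fun l _ => ?_
    rw [_root_.map_mul, Complex.conj_conj]
    ring
  have hI1C : ∑ i, (starRingEnd ℂ) (x i) * x i = ((N:ℂ)/r) * ((t:ℝ):ℂ) := by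
    simp_rw [hxexp]
    rw [collapse (fun i k l => v i k * (starRingEnd ℂ) (v i l))
      (fun k l => (starRingEnd ℂ) (y k) * y l) htight', htC]
  have hI1 : ∑ i, ‖x i‖^2 = (N:ℝ)/r * t := by
    have h := hI1C
    simp_rw [conj_mul_self] at h
    rw [← Complex.ofReal_sum] at h
    have h2 : ((∑ i, ‖x i‖^2 : ℝ) : ℂ) = (((N:ℝ)/r * t : ℝ) : ℂ) := by
      rw [h]; push_cast; ring
    exact_mod_cast h2
  -- Welch bound computation
  have hgexp : ∀ i j, (starRingEnd ℂ) (g i j) * g i j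
      = ∑ k, ∑ l, (v i k * (starRingEnd ℂ) (v i l)) * ((starRingEnd ℂ) (v j k) * v j l) := by
    intro i j
    rw [hgapp, map_sum, Finset.sum_mul_sum]
    refine Finset.sum_congr rfl fun k _ => Finset.sum_congr rfl fun l _ => ?_
    rw [_root_.map_mul, Complex.conj_conj]
    ring
  have hW : ∀ i, ∑ j, (starRingEnd ℂ) (g i j) * g i j = (N:ℂ)/r := by
    intro i
    simp_rw [hgexp]
    rw [collapse (fun j k l => (starRingEnd ℂ) (v j k) * v j l)
      (fun k l => v i k * (starRingEnd ℂ) (v i l)) hg', hunitC' i, mul_one]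
  have hWr : ∀ i, ∑ j, ‖g i j‖^2 = (N:ℝ)/r := by
    intro i
    have h := hW i
    simp_rw [conj_mul_self] at h
    rw [← Complex.ofReal_sum] at h
    have h2 : ((∑ j, ‖g i j‖^2 : ℝ) : ℂ) = (((N:ℝ)/r : ℝ) : ℂ) := by
      rw [h]; push_cast; ring
    exact_mod_cast h2
  have hα2 : α^2 = ((N:ℝ) - r)/(r * ((N:ℝ)-1)) := by
    have i0 : Fin N := ⟨0, by omega⟩
    have h := hWr i0
    rw [← Finset.add_sum_erase _ _ (Finset.mem_univ i0)] at h
    have hcard : (Finset.univ.erase i0).card = N - 1 := by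
      rw [Finset.card_erase_of_mem (Finset.mem_univ i0), Finset.card_univ, Fintype.card_fin]
    have hconst : ∑ j ∈ Finset.univ.erase i0, ‖g i0 j‖^2 = ((N:ℝ) - 1) * α^2 := by
      rw [Finset.sum_congr rfl (fun j hj => hgα i0 j (Ne.symm (Finset.ne_of_mem_erase hj)))]
      rw [Finset.sum_const, hcard, nsmul_eq_mul]
      congr 1
      rw [Nat.cast_sub (by omega)]
      simp
    rw [hconst, hgii i0] at h
    simp only [norm_one, one_pow] at h
    field_simp
    field_simp at h
    linarith
  have h1mα : 1 - α^2 = (N:ℝ)*((r:ℝ)-1)/((r:ℝ) * ((N:ℝ)-1)) := by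
    rw [hα2]
    field_simp
    ring
  have hα2nn : 0 ≤ 1 - α^2 := by
    rw [h1mα]
    have h1 : (0:ℝ) ≤ (N:ℝ)*((r:ℝ)-1) := by nlinarith
    have h2 : (0:ℝ) < (r:ℝ) * ((N:ℝ)-1) := by nlinarith
    positivity
  -- c values
  set c : Fin N → ℝ := fun i => ‖x i‖^2 - t/r with hcdef
  have hcapp : ∀ i, c i = ‖x i‖^2 - t/r := fun i => rfl
  clear_value c
  have hc0 : ∑ i, c i = 0 := by
    simp_rw [hcapp]
    rw [Finset.sum_sub_distrib, hI1, Finset.sum_const, Finset.card_univ, Fintype.card_fin,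
      nsmul_eq_mul]
    field_simp
    ring
  -- the matrices
  set M : Fin N → Fin r → Fin r → ℂ :=
    fun i k l => v i k * (starRingEnd ℂ) (v i l) - (if k = l then ((r:ℂ))⁻¹ else 0) with hMdef
  set Q : Fin r → Fin r → ℂ :=
    fun k l => y k * (starRingEnd ℂ) (y l) - (if k = l then ((t:ℝ):ℂ) * ((r:ℂ))⁻¹ else 0)
    with hQdef
  set B : Fin r → Fin r → ℂ := fun k l => ∑ i, ((c i : ℝ):ℂ) * M i k l with hBdef
  have hMapp : ∀ i k l, M i k l
      = v i k * (starRingEnd ℂ) (v i l) - (if k = l then ((r:ℂ))⁻¹ else 0) := fun _ _ _ => rfl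
  have hQapp : ∀ k l, Q k l
      = y k * (starRingEnd ℂ) (y l) - (if k = l then ((t:ℝ):ℂ) * ((r:ℂ))⁻¹ else 0) :=
    fun _ _ => rfl
  have hBapp : ∀ k l, B k l = ∑ i, ((c i : ℝ):ℂ) * M i k l := fun _ _ => rfl
  clear_value M Q B
  have hconjM : ∀ i k l, (starRingEnd ℂ) (M i k l)
      = (starRingEnd ℂ) (v i k) * v i l - (if k = l then ((r:ℂ))⁻¹ else 0) := by
    intro i k l
    rw [hMapp]
    rw [map_sub, _root_.map_mul, Complex.conj_conj]
    congr 1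
    split <;> simp
  have hconjQ : ∀ k l, (starRingEnd ℂ) (Q k l)
      = (starRingEnd ℂ) (y k) * y l - (if k = l then ((t:ℝ):ℂ) * ((r:ℂ))⁻¹ else 0) := by
    intro k l
    rw [hQapp]
    rw [map_sub, _root_.map_mul, Complex.conj_conj]
    congr 1
    split <;> simp [Complex.conj_ofReal]
  -- S2 : inner product of Q with M i
  have hS2 : ∀ i, ∑ k, ∑ l, (starRingEnd ℂ) (Q k l) * M i k l = ((c i : ℝ) : ℂ) := by
    intro i
    simp_rw [hconjQ, hMapp]
    rw [pair_inner (fun k => (starRingEnd ℂ) (y k)) y (v i) (fun l => (starRingEnd ℂ) (v i l))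
      (((t:ℝ):ℂ) * ((r:ℂ))⁻¹) ((r:ℂ))⁻¹]
    have e1 : ∑ k, (starRingEnd ℂ) (y k) * v i k = (starRingEnd ℂ) (x i) := by
      rw [hxi i, map_sum]
      refine (Finset.sum_congr rfl fun k _ => ?_).symm
      rw [_root_.map_mul, Complex.conj_conj]
      ring
    have e2 : ∑ l, y l * (starRingEnd ℂ) (v i l) = x i := by
      rw [hxi i]
      exact Finset.sum_congr rfl fun l _ => mul_comm _ _
    rw [e1, e2, conj_mul_self, hunitC' i, htC, hcapp i]
    push_cast
    field_simp
    ring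
  -- S3 : norm of Q
  have hS3 : ∑ k, ∑ l, (starRingEnd ℂ) (Q k l) * Q k l = ((t^2 - t^2/r : ℝ) : ℂ) := by
    simp_rw [hconjQ, hQapp]
    rw [pair_inner (fun k => (starRingEnd ℂ) (y k)) y y (fun l => (starRingEnd ℂ) (y l))
      (((t:ℝ):ℂ) * ((r:ℂ))⁻¹) (((t:ℝ):ℂ) * ((r:ℂ))⁻¹)]
    rw [htC, htC']
    push_cast
    field_simp
    ring
  -- S1 : inner products of the M's
  have hS1 : ∀ i j, ∑ k, ∑ l, (starRingEnd ℂ) (M j k l) * M i k l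
      = ((‖g j i‖^2 : ℝ) : ℂ) - ((r:ℂ))⁻¹ := by
    intro i j
    simp_rw [hconjM, hMapp]
    rw [pair_inner (fun k => (starRingEnd ℂ) (v j k)) (v j) (v i)
      (fun l => (starRingEnd ℂ) (v i l)) ((r:ℂ))⁻¹ ((r:ℂ))⁻¹]
    have e1 : ∑ k, (starRingEnd ℂ) (v j k) * v i k = g j i := (hgapp j i).symm
    have e2 : ∑ l, v j l * (starRingEnd ℂ) (v i l) = (starRingEnd ℂ) (g j i) := by
      rw [hgapp, map_sum]
      refine (Finset.sum_congr rfl fun l _ => ?_).symm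
      rw [_root_.map_mul, Complex.conj_conj]
    rw [e1, e2, mul_conj_self, hunitC' i, hunitC j]
    field_simp
    ring
  -- E1 : <Q,B> = sum c^2
  have hE1 : ∑ k, ∑ l, (starRingEnd ℂ) (Q k l) * B k l = ((∑ i, (c i)^2 : ℝ) : ℂ) := by
    have step : ∀ k l, (starRingEnd ℂ) (Q k l) * B k l
        = ∑ i, ((c i : ℝ):ℂ) * ((starRingEnd ℂ) (Q k l) * M i k l) := by
      intro k l
      rw [hBapp, Finset.mul_sum]
      exact Finset.sum_congr rfl fun i _ => by ring
    simp_rw [step]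
    rw [swap_sum3]
    have inner : ∀ i : Fin N, ∑ k, ∑ l, ((c i : ℝ):ℂ) * ((starRingEnd ℂ) (Q k l) * M i k l)
        = ((c i : ℝ):ℂ) * ((c i : ℝ):ℂ) := by
      intro i
      simp_rw [← Finset.mul_sum]
      rw [hS2 i]
    simp_rw [inner]
    push_cast
    exact Finset.sum_congr rfl fun i _ => by ring
  -- E3 : <B,B>
  have hE3 : ∑ k, ∑ l, (starRingEnd ℂ) (B k l) * B k l
      = (((1 - α^2) * ∑ i, (c i)^2 : ℝ) : ℂ) := by
    have hconjB : ∀ k l, (starRingEnd ℂ) (B k l)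
        = ∑ j, ((c j : ℝ):ℂ) * (starRingEnd ℂ) (M j k l) := by
      intro k l
      rw [hBapp, map_sum]
      exact Finset.sum_congr rfl fun j _ => by
        rw [_root_.map_mul, Complex.conj_ofReal]
    have step : ∀ k l, (starRingEnd ℂ) (B k l) * B k l
        = ∑ j, ∑ i, (((c j : ℝ):ℂ) * ((c i : ℝ):ℂ))
            * ((starRingEnd ℂ) (M j k l) * M i k l) := by
      intro k l
      rw [hconjB, hBapp, Finset.sum_mul_sum]
      exact Finset.sum_congr rfl fun j _ => Finset.sum_congr rfl fun i _ => by ring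
    simp_rw [step]
    rw [swap_sum3]
    have swapin : ∀ j, ∑ k, ∑ l, ∑ i, (((c j : ℝ):ℂ) * ((c i : ℝ):ℂ))
          * ((starRingEnd ℂ) (M j k l) * M i k l)
        = ∑ i, (((c j : ℝ):ℂ) * ((c i : ℝ):ℂ)) * (((‖g j i‖^2 : ℝ) : ℂ) - ((r:ℂ))⁻¹) := by
      intro j
      rw [swap_sum3]
      refine Finset.sum_congr rfl fun i _ => ?_
      simp_rw [← Finset.mul_sum]
      rw [hS1 i j]
    simp_rw [swapin]
    have perj : ∀ j, ∑ i, c j * c i * (‖g j i‖^2 - 1/(r:ℝ)) = (1-α^2) * (c j)^2 := by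
      intro j
      rw [← Finset.add_sum_erase _ _ (Finset.mem_univ j)]
      have hdiag : c j * c j * (‖g j j‖^2 - 1/(r:ℝ)) = c j^2 * (1 - 1/(r:ℝ)) := by
        rw [hgii j]
        simp only [norm_one, one_pow]
        ring
      have herase : ∑ i ∈ Finset.univ.erase j, c j * c i * (‖g j i‖^2 - 1/(r:ℝ))
          = (α^2 - 1/(r:ℝ)) * c j * (- c j) := by
        rw [Finset.sum_congr rfl (fun i hi => by
          rw [hgα j i (Ne.symm (Finset.ne_of_mem_erase hi))])]
        have : ∀ i, c j * c i * (α^2 - 1/(r:ℝ)) = ((α^2 - 1/(r:ℝ)) * c j) * c i := by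
          intro i; ring
        rw [Finset.sum_congr rfl (fun i _ => this i), ← Finset.mul_sum,
          Finset.sum_erase_eq_sub (Finset.mem_univ j), hc0]
        ring
      rw [hdiag, herase]
      ring
    have hj : ∀ j, ∑ i, (((c j : ℝ):ℂ) * ((c i : ℝ):ℂ)) * (((‖g j i‖^2 : ℝ) : ℂ) - ((r:ℂ))⁻¹)
        = (((1-α^2) * (c j)^2 : ℝ):ℂ) := by
      intro j
      have e : ∀ i : Fin N, (((c j : ℝ):ℂ) * ((c i : ℝ):ℂ)) * (((‖g j i‖^2 : ℝ) : ℂ) - ((r:ℂ))⁻¹)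
          = (((c j * c i * (‖g j i‖^2 - 1/(r:ℝ)) : ℝ)) : ℂ) := by
        intro i
        push_cast
        ring
      simp_rw [e, ← Complex.ofReal_sum, perj j]
    simp_rw [hj, ← Complex.ofReal_sum]
    rw [Complex.ofReal_inj, ← Finset.mul_sum]
  -- convert to real statements
  have hE2r : ∑ k, ∑ l, ‖Q k l‖^2 = t^2 - t^2/r := by
    have h := hS3
    simp_rw [conj_mul_self] at h
    simp_rw [← Complex.ofReal_sum] at h
    exact_mod_cast h
  have hE3r : ∑ k, ∑ l, ‖B k l‖^2 = (1 - α^2) * ∑ i, (c i)^2 := by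
    have h := hE3
    simp_rw [conj_mul_self] at h
    simp_rw [← Complex.ofReal_sum] at h
    exact_mod_cast h
  -- Cauchy-Schwarz in matrix space
  have hCS' := cs_complex (fun p : Fin r × Fin r => Q p.1 p.2) (fun p => B p.1 p.2)
  have ep1 : ∑ p : Fin r × Fin r, (starRingEnd ℂ) (Q p.1 p.2) * B p.1 p.2
      = ∑ k, ∑ l, (starRingEnd ℂ) (Q k l) * B k l :=
    Fintype.sum_prod_type (f := fun p => (starRingEnd ℂ) (Q p.1 p.2) * B p.1 p.2)
  have ep2 : ∑ p : Fin r × Fin r, ‖Q p.1 p.2‖^2 = ∑ k, ∑ l, ‖Q k l‖^2 :=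
    Fintype.sum_prod_type (f := fun p => ‖Q p.1 p.2‖^2)
  have ep3 : ∑ p : Fin r × Fin r, ‖B p.1 p.2‖^2 = ∑ k, ∑ l, ‖B k l‖^2 :=
    Fintype.sum_prod_type (f := fun p => ‖B p.1 p.2‖^2)
  have hCS : (∑ i, (c i)^2)^2 ≤ (t^2 - t^2/r) * ((1 - α^2) * ∑ i, (c i)^2) := by
    have h := hCS'
    rw [ep1, ep2, ep3, hE1, hE2r, hE3r, Complex.ofReal_re] at h
    calc (∑ i, (c i)^2)^2 ≤ (∑ k, ∑ l, ‖Q k l‖^2) * (∑ k, ∑ l, ‖B k l‖^2) := by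
          rw [hE2r, hE3r]; exact h
      _ = (t^2 - t^2/r) * ((1 - α^2) * ∑ i, (c i)^2) := by rw [hE2r, hE3r]
  set S0 : ℝ := ∑ i, (c i)^2 with hS0def
  clear_value S0
  have hS0nn : 0 ≤ S0 := by
    rw [hS0def]
    exact Finset.sum_nonneg fun i _ => sq_nonneg _
  have hS0le : S0 ≤ (t^2 - t^2/r) * (1 - α^2) := by
    rcases eq_or_lt_of_le hS0nn with h0 | h0
    · rw [← h0]
      have h1 : 0 ≤ t^2 - t^2/r := by
        have : t^2/r ≤ t^2 := by
          rw [div_le_iff₀ hr0]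
          nlinarith [sq_nonneg t]
        linarith
      nlinarith
    · have h2 : S0 * S0 ≤ ((t^2 - t^2/r) * (1 - α^2)) * S0 := by
        calc S0 * S0 = S0^2 := (sq S0).symm
          _ ≤ (t^2 - t^2/r) * ((1 - α^2) * S0) := hCS
          _ = ((t^2 - t^2/r) * (1 - α^2)) * S0 := by ring
      exact le_of_mul_le_mul_right h2 h0
  -- sum of fourth powers
  have hsum4 : ∑ i, (‖x i‖^2)^2 = S0 + N * (t/r)^2 := by
    have e : ∀ i : Fin N, (‖x i‖^2)^2 = (c i)^2 + 2*(t/r)*(c i) + (t/r)^2 := by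
      intro i
      rw [hcapp i]
      ring
    simp_rw [e]
    rw [Finset.sum_add_distrib, Finset.sum_add_distrib, ← Finset.mul_sum, hc0,
      Finset.sum_const, Finset.card_univ, Fintype.card_fin, nsmul_eq_mul, hS0def]
    ring
  -- positivity of t
  have ht0 : 0 < t := by
    have hex : ∃ i, x i ≠ 0 := by
      by_contra h
      push_neg at h
      exact hx0 (funext h)
    obtain ⟨i0, hi0⟩ := hex
    have h1 : 0 < ∑ i, ‖x i‖^2 := by
      refine Finset.sum_pos' (fun i _ => by positivity) ⟨i0, Finset.mem_univ i0, ?_⟩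
      have : 0 < ‖x i0‖ := norm_pos_iff.mpr hi0
      positivity
    rw [hI1] at h1
    by_contra h
    push_neg at h
    nlinarith [div_pos hN0 hr0]
  -- support Cauchy-Schwarz
  set S : Finset (Fin N) := Finset.univ.filter fun i => x i ≠ 0 with hSdef
  clear_value S
  have hXoff : ∀ i ∈ Finset.univ \ S, ‖x i‖^2 = 0 := by
    intro i hi
    rw [Finset.mem_sdiff, hSdef, Finset.mem_filter] at hi
    have : x i = 0 := by
      by_contra hne
      exact hi.2 ⟨Finset.mem_univ i, hne⟩
    rw [this]
    simp
  have hsup : ∑ i, ‖x i‖^2 = ∑ i ∈ S, ‖x i‖^2 := by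
    refine (Finset.sum_subset (Finset.subset_univ S) ?_).symm
    intro i _ hi
    exact hXoff i (Finset.mem_sdiff.mpr ⟨Finset.mem_univ i, hi⟩)
  have hCS2 := Finset.sum_mul_sq_le_sq_mul_sq S (fun _ => (1:ℝ)) (fun i => ‖x i‖^2)
  simp only [one_mul, one_pow, Finset.sum_const, nsmul_eq_mul, mul_one] at hCS2
  have hsub : ∑ i ∈ S, (‖x i‖^2)^2 ≤ ∑ i, (‖x i‖^2)^2 :=
    Finset.sum_le_sum_of_subset_of_nonneg (Finset.subset_univ S) fun i _ _ => sq_nonneg _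
  -- final arithmetic
  set K : ℝ := 1 + ((r:ℝ) - 1)^2 / ((N:ℝ) - 1) with hKdef
  clear_value K
  have hK0 : 0 < K := by
    rw [hKdef]
    have : 0 ≤ ((r:ℝ) - 1)^2 / ((N:ℝ) - 1) := div_nonneg (sq_nonneg _) (by linarith)
    linarith
  have hbound : ∑ i, (‖x i‖^2)^2 ≤ t^2 * ((N:ℝ)/(r:ℝ)^2) * K := by
    rw [hsum4]
    have h1 : S0 + (N:ℝ) * (t/r)^2 ≤ (t^2 - t^2/r) * (1 - α^2) + (N:ℝ) * (t/r)^2 := by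
      linarith
    refine h1.trans (le_of_eq ?_)
    rw [h1mα, hKdef]
    field_simp
    ring
  have hchain : ((N:ℝ)/r * t)^2 ≤ (S.card : ℝ) * (t^2 * ((N:ℝ)/(r:ℝ)^2) * K) := by
    calc ((N:ℝ)/r * t)^2 = (∑ i, ‖x i‖^2)^2 := by rw [hI1]
      _ = (∑ i ∈ S, ‖x i‖^2)^2 := by rw [hsup]
      _ ≤ (S.card : ℝ) * ∑ i ∈ S, (‖x i‖^2)^2 := hCS2
      _ ≤ (S.card : ℝ) * ∑ i, (‖x i‖^2)^2 := by
          have : (0:ℝ) ≤ (S.card : ℝ) := Nat.cast_nonneg _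
          nlinarith
      _ ≤ (S.card : ℝ) * (t^2 * ((N:ℝ)/(r:ℝ)^2) * K) := by
          have : (0:ℝ) ≤ (S.card : ℝ) := Nat.cast_nonneg _
          nlinarith
  have hfinal : (N:ℝ) ≤ (S.card : ℝ) * K := by
    have hpos : 0 < t^2 * ((N:ℝ)/(r:ℝ)^2) := by positivity
    have h2 : (t^2 * ((N:ℝ)/(r:ℝ)^2)) * (N:ℝ) ≤ (t^2 * ((N:ℝ)/(r:ℝ)^2)) * ((S.card : ℝ) * K) := by
      calc (t^2 * ((N:ℝ)/(r:ℝ)^2)) * (N:ℝ) = ((N:ℝ)/r * t)^2 := by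
            field_simp
        _ ≤ (S.card : ℝ) * (t^2 * ((N:ℝ)/(r:ℝ)^2) * K) := hchain
        _ = (t^2 * ((N:ℝ)/(r:ℝ)^2)) * ((S.card : ℝ) * K) := by ring
    exact le_of_mul_le_mul_left h2 hpos
  rw [← div_eq_mul_inv, div_le_iff₀ hK0]
  exact hfinal
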